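/- Let f : R → R' be a homomorphism of commutative semirings, and let S be a multiplicative subset of R such that 0 ∉ f(S). If A is an f(S)-primary k-ideal of R' (disjoint from f(S)), then there exists s ∈ S such that the quotient ideal (A : f(s)) is a primary ideal of R'; moreover, for every s ∈ S, f((f⁻¹(A) : s)) ⊆ (A : f(s)). -/
import Mathlib


/-- For an ideal `A` of a commutative semiring and an element `t`,
the quotient (colon) ideal `(A : t) = {x | t * x ∈ A}`. -/
def colonIdeal {R : Type*} [CommSemiring R] (A : Ideal R) (t : R) : Ideal R where
  carrier := {x : R | t * x ∈ A}
  add_mem' := fun {a b} ha hb => by simpa [mul_add] using A.add_mem ha hb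
  zero_mem' := by simp
  smul_mem' := fun c x hx => by
    simpa [smul_eq_mul, mul_left_comm] using A.mul_mem_left c hx

/-- If `f : R → R'` is a semiring homomorphism with `0 ∉ f(S)` and `A` is an
`f(S)`-primary k-ideal of `R'`, then `(A : f(s))` is a primary ideal of `R'`
for some `s ∈ S`, and `f((f⁻¹(A) : s)) ⊆ (A : f(s))` for every `s ∈ S`. -/
theorem colon_primary_of_fS_primary {R R' : Type*} [CommSemiring R] [CommSemiring R']
    (f : R →+* R')
    (S : Set R) (hS1 : (1 : R) ∈ S) (hSmul : ∀ s ∈ S, ∀ t ∈ S, s * t ∈ S)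
    (h0 : (0 : R') ∉ f '' S)
    (A : Ideal R') (hAfS : Disjoint (f '' S) (A : Set R'))
    (hAk : ∀ a b : R', a + b ∈ A → a ∈ A → b ∈ A)
    (hAprim : ∃ σ ∈ f '' S, ∀ a b : R', a * b ∈ A → σ * a ∈ A ∨ σ * b ∈ A.radical) :
    (∃ s ∈ S, colonIdeal A (f s) ≠ ⊤ ∧
      ∀ a b : R', a * b ∈ colonIdeal A (f s) →
        a ∈ colonIdeal A (f s) ∨ b ∈ (colonIdeal A (f s)).radical) ∧
    (∀ s ∈ S, ∀ x ∈ colonIdeal (A.comap f) s, f x ∈ colonIdeal A (f s)) := by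
  obtain ⟨σ, ⟨s₀, hs₀S, hs₀⟩, hprim⟩ := hAprim
  subst hs₀
  have hpow : ∀ n : ℕ, s₀ ^ n ∈ S := by
    intro n
    induction n with
    | zero => simpa using hS1
    | succ n ih => rw [pow_succ]; exact hSmul _ ih _ hs₀S
  have hσpow : ∀ n : ℕ, (f s₀) ^ n ∉ A := by
    intro n h
    refine Set.disjoint_left.mp hAfS ⟨s₀ ^ n, hpow n, ?_⟩ h
    rw [map_pow]
  have key : ∀ (y : R') (m : ℕ), (f s₀) ^ m * y ∈ A → (f s₀) ^ 2 * y ∈ A := by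
    intro y m h
    match m with
    | 0 => exact A.mul_mem_left _ (by simpa using h)
    | m + 1 =>
      have hin : (f s₀ * y) * ((f s₀) ^ m) ∈ A := by
        have he : (f s₀ * y) * ((f s₀) ^ m) = (f s₀) ^ (m + 1) * y := by ring
        rw [he]; exact h
      rcases hprim _ _ hin with h1 | h2
      · have he : (f s₀) ^ 2 * y = f s₀ * (f s₀ * y) := by ring
        rw [he]; exact h1
      · exfalso
        obtain ⟨k, hk⟩ := h2
        have he : (f s₀ * (f s₀) ^ m) ^ k = (f s₀) ^ ((m + 1) * k) := by ring
        rw [he] at hk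
        exact hσpow _ hk
  constructor
  · refine ⟨s₀ * s₀, hSmul _ hs₀S _ hs₀S, ?_, ?_⟩
    · intro htop
      have h1 : (1 : R') ∈ colonIdeal A (f (s₀ * s₀)) := htop ▸ Submodule.mem_top
      have h2 : f (s₀ * s₀) * 1 ∈ A := h1
      rw [map_mul, mul_one] at h2
      exact hσpow 2 (by rw [sq]; exact h2)
    · intro a b hab
      have hab' : (f s₀ * a) * (f s₀ * b) ∈ A := by
        have h2 : f (s₀ * s₀) * (a * b) ∈ A := hab
        rw [map_mul] at h2
        have he : (f s₀ * a) * (f s₀ * b) = f s₀ * f s₀ * (a * b) := by ring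
        rw [he]; exact h2
      rcases hprim _ _ hab' with h1 | h2
      · left
        show f (s₀ * s₀) * a ∈ A
        rw [map_mul]
        have he : f s₀ * (f s₀ * a) = f s₀ * f s₀ * a := by ring
        rw [he] at h1
        exact h1
      · right
        obtain ⟨k, hk⟩ := h2
        have he : (f s₀ * (f s₀ * b)) ^ k = (f s₀) ^ (2 * k) * b ^ k := by ring
        rw [he] at hk
        refine ⟨k, ?_⟩
        show f (s₀ * s₀) * b ^ k ∈ A
        rw [map_mul, ← sq]
        exact key _ _ hk
  · intro s hs x hx
    have h1 : f (s * x) ∈ A := hx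
    show f s * f x ∈ A
    rw [← map_mul]
    exact h1
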